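/- Let Λ be a commutative Noetherian regular local ring and R a commutative Λ-algebra that is free of finite rank as a Λ-module and admits an isomorphism of R-modules Hom_Λ(R, Λ) ≅ R. Let P be a finitely generated R-module annihilated by some non-zero-divisor of R. Then P has projective dimension at most 1 over R if and only if there exist an integer a ≥ 0 and an exact sequence of R-modules 0 → R^a → R^a → P → 0. -/

import Mathlib

open Function CategoryTheory

/-- A commutative Noetherian local ring is regular if its maximal ideal can be generated by
(Krull dimension of the ring) many elements. -/
def IsRegularLocal (A : Type*) [CommRing A] [IsLocalRing A] : Prop :=
  ∃ s : Finset A, Ideal.span (s : Set A) = IsLocalRing.maximalIdeal A ∧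
    (s.card : WithBot ℕ∞) = ringKrullDim A

/-- An `R`-module has projective dimension at most one if it admits a projective
resolution `0 → P₁ → P₀ → M → 0` of length one. -/
def ProjDimLEOne (R : Type u) [CommRing R] (M : Type u) [AddCommGroup M] [Module R M] : Prop :=
  ∃ (P₁ P₀ : ModuleCat.{u} R) (f : P₁ ⟶ P₀) (g : P₀ ⟶ ModuleCat.of R M),
    Module.Projective R P₁ ∧ Module.Projective R P₀ ∧
    Function.Injective f ∧ Function.Exact f g ∧ Function.Surjective g

theorem aux_ker_projective {R : Type u} [CommRing R] {P : Type u} [AddCommGroup P] [Module R P]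
    (h : ProjDimLEOne R P) {n : ℕ} (π : (Fin n → R) →ₗ[R] P) (hπ : Surjective π) :
    Module.Projective R ↥(LinearMap.ker π) := by
  obtain ⟨P₁, P₀, F, G, h₁, h₀, hFinj, hexact, hGsurj⟩ := h
  have hFG : LinearMap.ker G.hom = LinearMap.range F.hom :=
    LinearMap.exact_iff.mp hexact
  -- lift π through G
  obtain ⟨α, hα⟩ := Module.projective_lifting_property G.hom π hGsurj
  -- ζ : (Fin n → R) × P₁ → P₀
  set ζ : ((Fin n → R) × P₁) →ₗ[R] P₀ :=
    α ∘ₗ LinearMap.fst R (Fin n → R) P₁ + F.hom ∘ₗ LinearMap.snd R (Fin n → R) P₁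
    with hζ
  have hζ_apply : ∀ x y, ζ (x, y) = α x + F y := fun x y => rfl
  have hπα : ∀ x, G (α x) = π x := fun x => LinearMap.congr_fun hα x
  have hζsurj : Surjective ζ := by
    intro z
    obtain ⟨x, hx⟩ := hπ (G z)
    have : G (z - α x) = 0 := by
      simp [map_sub, hπα, hx]
    have hz : z - α x ∈ LinearMap.range F.hom := by
      rw [← hFG]; exact this
    obtain ⟨y, hy⟩ := hz
    exact ⟨(x, y), by simp [hζ_apply, hy]⟩
  -- W := ker ζ is projective
  obtain ⟨σ, hσ⟩ := Module.projective_lifting_property ζ (LinearMap.id (M := P₀)) hζsurj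
  have hσ' : ∀ z, ζ (σ z) = z := fun z => congrArg (fun (f : P₀ →ₗ[R] P₀) => f z) hσ
  set W := LinearMap.ker ζ
  have hρmem : ∀ v : (Fin n → R) × P₁, v - σ (ζ v) ∈ W := by
    intro v; simp [W, LinearMap.mem_ker, map_sub, hσ']
  set ρ : ((Fin n → R) × P₁) →ₗ[R] ↥W :=
    LinearMap.codRestrict W (LinearMap.id - σ ∘ₗ ζ) (fun v => hρmem v)
  have hWproj : Module.Projective R ↥W := by
    refine Module.Projective.of_split W.subtype ρ ?_
    refine LinearMap.ext fun w => Subtype.ext ?_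
    have hw : ζ (w : ((Fin n → R) × P₁)) = 0 := w.2
    show (w : ((Fin n → R) × P₁)) - σ (ζ (w : ((Fin n → R) × P₁))) = (w : ((Fin n → R) × P₁))
    rw [hw, map_zero, sub_zero]
  -- W ≃ ker π
  have hGF : ∀ y : P₁, G (F y) = 0 := fun y => hexact.apply_apply_eq_zero y
  have hmem : ∀ w : ↥W, (w : ((Fin n → R) × P₁)).1 ∈ LinearMap.ker π := by
    rintro ⟨⟨x, y⟩, hw⟩
    simp only [LinearMap.mem_ker, W, hζ_apply] at hw ⊢
    have : α x = - F y := by rw [eq_neg_iff_add_eq_zero]; exact hw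
    rw [← hπα, this, map_neg, hGF, neg_zero]
  set e : ↥W →ₗ[R] ↥(LinearMap.ker π) :=
    LinearMap.codRestrict (LinearMap.ker π)
      ((LinearMap.fst R (Fin n → R) P₁) ∘ₗ W.subtype) hmem
  have hebij : Bijective e := by
    constructor
    · rintro ⟨⟨x₁, y₁⟩, hw₁⟩ ⟨⟨x₂, y₂⟩, hw₂⟩ hxy
      have hx : x₁ = x₂ := congrArg Subtype.val hxy
      subst hx
      simp only [LinearMap.mem_ker, W, hζ_apply] at hw₁ hw₂
      have : F y₁ = F y₂ := by
        have := hw₁.trans hw₂.symm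
        exact add_left_cancel (hw₁.trans hw₂.symm)
      exact Subtype.ext (Prod.ext rfl (hFinj this))
    · rintro ⟨x, hx⟩
      simp only [LinearMap.mem_ker] at hx
      have : α x ∈ LinearMap.range F.hom := by
        rw [← hFG]; simp [LinearMap.mem_ker, hπα, hx]
      obtain ⟨y, hy⟩ := this
      refine ⟨⟨(x, -y), ?_⟩, ?_⟩
      · simp [W, LinearMap.mem_ker, hζ_apply, hy]
      · exact Subtype.ext rfl
  exact Module.Projective.of_equiv (LinearEquiv.ofBijective e hebij)

theorem aux_max_finite {Λ : Type u} [CommRing Λ] [IsLocalRing Λ]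
    {R : Type u} [CommRing R] [Algebra Λ R] [Module.Finite Λ R] :
    {m : Ideal R | m.IsMaximal}.Finite := by
  cases subsingleton_or_nontrivial R with
  | inl h =>
    convert Set.finite_empty
    ext m; simp only [Set.mem_setOf_eq, Set.mem_empty_iff_false, iff_false]
    intro hm; exact hm.ne_top (Subsingleton.elim _ _)
  | inr h =>
    set I : Ideal R := Ideal.map (algebraMap Λ R) (IsLocalRing.maximalIdeal Λ) with hI
    have hInetop : I ≠ ⊤ := by
      intro htop
      have h1 : (⊤ : Submodule Λ R) ≤ (IsLocalRing.maximalIdeal Λ) • ⊤ := by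
        rw [Ideal.smul_top_eq_map]
        intro x _
        rw [Submodule.restrictScalars_mem, ← hI, htop]; trivial
      have h2 := Submodule.eq_bot_of_le_smul_of_le_jacobson_bot (IsLocalRing.maximalIdeal Λ)
        ⊤ Module.Finite.fg_top h1
        (by rw [IsLocalRing.jacobson_eq_maximalIdeal (⊥ : Ideal Λ) bot_ne_top])
      have : (1 : R) ∈ (⊥ : Submodule Λ R) := h2 ▸ Submodule.mem_top
      rw [Submodule.mem_bot] at this
      exact one_ne_zero this
    have hJmax : (I.comap (algebraMap Λ R)).IsMaximal := by
      have hne : I.comap (algebraMap Λ R) ≠ ⊤ := by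
        intro htop
        have : (1 : Λ) ∈ I.comap (algebraMap Λ R) := htop ▸ trivial
        rw [Ideal.mem_comap, map_one] at this
        exact hInetop (Ideal.eq_top_of_isUnit_mem _ this isUnit_one)
      have hle : IsLocalRing.maximalIdeal Λ ≤ I.comap (algebraMap Λ R) := fun x hx =>
        Ideal.mem_comap.mpr (Ideal.mem_map_of_mem _ hx)
      exact ((IsLocalRing.maximalIdeal.isMaximal Λ).eq_of_le hne hle) ▸
        IsLocalRing.maximalIdeal.isMaximal Λ
    haveI := hJmax
    letI : Field (Λ ⧸ I.comap (algebraMap Λ R)) := Ideal.Quotient.field _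
    haveI : Module.Finite Λ (R ⧸ I) :=
      Module.Finite.of_surjective (Submodule.mkQ (Submodule.restrictScalars Λ (I : Submodule R R)))
        (Submodule.mkQ_surjective _)
    haveI : Module.Finite (Λ ⧸ I.comap (algebraMap Λ R)) (R ⧸ I) :=
      Module.Finite.of_restrictScalars_finite Λ _ _
    haveI : IsArtinian (Λ ⧸ I.comap (algebraMap Λ R)) (R ⧸ I) := isArtinian_of_fg_of_artinian'
    haveI : IsArtinianRing (R ⧸ I) := isArtinian_of_tower (Λ ⧸ I.comap (algebraMap Λ R))
      inferInstance
    have hAfin := IsArtinianRing.setOfPred_isMaximal_finite (R := R ⧸ I)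
    have hsub : {m : Ideal R | m.IsMaximal} ⊆
        (Ideal.comap (Ideal.Quotient.mk I)) '' {mA : Ideal (R ⧸ I) | mA.IsMaximal} := by
      intro m hm
      haveI : m.IsMaximal := hm
      have hle : I ≤ m := by
        have hcm : (Ideal.comap (algebraMap Λ R) m).IsMaximal :=
          Ideal.isMaximal_comap_of_isIntegral_of_isMaximal (R := Λ) m
        have := IsLocalRing.eq_maximalIdeal hcm
        rw [hI, ← this]
        exact Ideal.map_comap_le
      have hmm : Ideal.comap (Ideal.Quotient.mk I) (Ideal.map (Ideal.Quotient.mk I) m) = m := by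
        rw [Ideal.comap_map_of_surjective (Ideal.Quotient.mk I) Ideal.Quotient.mk_surjective,
          ← RingHom.ker_eq_comap_bot, Ideal.mk_ker]
        exact sup_eq_left.mpr hle
      have hmax : (Ideal.map (Ideal.Quotient.mk I) m).IsMaximal := by
        rcases Ideal.map_eq_top_or_isMaximal_of_surjective (Ideal.Quotient.mk I) Ideal.Quotient.mk_surjective hm
          with htop | hmax
        · exfalso
          rw [htop, Ideal.comap_top] at hmm
          exact hm.ne_top hmm.symm
        · exact hmax
      exact ⟨_, hmax, hmm⟩
    exact Set.Finite.subset (hAfin.image _) hsub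

theorem aux_local_span {R : Type u} [CommRing R] [IsNoetherianRing R]
    {M : Type u} [AddCommGroup M] [Module R M] [Module.Finite R M] [Module.Projective R M]
    {n : ℕ} (ι : M →ₗ[R] (Fin n → R)) (hι : Injective ι)
    (m : Ideal R) (hm : m.IsMaximal) :
    ∃ w : Fin n → M, ⊤ ≤ Submodule.span R (Set.range w) ⊔ (m • ⊤ : Submodule R M) := by
  haveI : Nontrivial R := by
    rcases subsingleton_or_nontrivial R with hs | hs
    · exact absurd (Subsingleton.elim m ⊤) hm.ne_top
    · exact hs
  haveI : m.IsPrime := hm.isPrime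
  set p : Submonoid R := m.primeCompl with hp
  set Rₘ := Localization.AtPrime m with hRₘ
  set Mₘ := LocalizedModule p M with hMₘ
  set fₘ := LocalizedModule.mkLinearMap p M with hfₘ
  haveI : Module.FinitePresentation R M := Module.finitePresentation_of_finite R M
  haveI : Module.Projective Rₘ Mₘ := Module.projective_of_isLocalizedModule p fₘ
  haveI : Module.Free Rₘ Mₘ := Module.free_of_flat_of_isLocalRing
  -- rank bound
  have hrank : Module.rank Rₘ Mₘ ≤ (n : Cardinal) := by
    have hinj2 : Injective (LocalizedModule.map p ι) := LocalizedModule.map_injective p ι hι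
    have h1 := LinearMap.rank_le_of_injective _ hinj2
    have h2 : Module.rank Rₘ (LocalizedModule p (Fin n → R)) = (n : Cardinal) := by
      have := Module.lift_rank_of_isLocalizedModule_of_free Rₘ p
        (LocalizedModule.mkLinearMap p (Fin n → R))
      rw [rank_fin_fun] at this
      simpa using this
    exact h1.trans (le_of_eq h2)
  set ib := Module.Free.ChooseBasisIndex Rₘ Mₘ with hib
  set b : Module.Basis ib Rₘ Mₘ := Module.Free.chooseBasis Rₘ Mₘ with hb
  have hcard : Fintype.card ib ≤ n := by
    have h1 : Module.finrank Rₘ Mₘ ≤ n := Module.finrank_le_of_rank_le hrank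
    rwa [Module.finrank_eq_card_chooseBasisIndex] at h1
  obtain ⟨emb⟩ : Nonempty (ib ↪ Fin n) :=
    Function.Embedding.nonempty_of_card_le (by simpa using hcard)
  -- choose numerators
  have hsur := fun i => IsLocalizedModule.mk'_surjective p fₘ (b i)
  choose aa haa using fun i => (IsLocalizedModule.mk'_surjective p fₘ) (b i)
  -- aa i : M × p with mk' fₘ (aa i).1 (aa i).2 = b i  (via uncurry)
  set a : ib → M := fun i => (aa i).1 with ha
  set s : ib → p := fun i => (aa i).2 with hs
  have hmk : ∀ i, IsLocalizedModule.mk' fₘ (a i) (s i) = b i := fun i => haa i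
  classical
  set w : Fin n → M := fun j => if h : ∃ i, emb i = j then a h.choose else 0 with hw
  have hrange : ∀ i, a i = w (emb i) := by
    intro i
    have hex : ∃ i', emb i' = emb i := ⟨i, rfl⟩
    have : hex.choose = i := emb.injective hex.choose_spec
    simp [hw, dif_pos hex, this]
  -- localized span is everything
  have hloc : Submodule.localized' Rₘ p fₘ (Submodule.span R (Set.range a)) = ⊤ := by
    rw [Submodule.localized'_span]
    rw [eq_top_iff, ← b.span_eq]
    refine Submodule.span_le.mpr ?_
    rintro _ ⟨i, rfl⟩
    have hcancel : (s i : R) • (IsLocalization.mk' Rₘ (1 : R) (s i) • fₘ (a i)) = fₘ (a i) := by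
      rw [algebra_compatible_smul Rₘ ((s i : R)), smul_smul, IsLocalization.mk'_spec', map_one,
        one_smul]
    have hcancel2 : (s i : R) • b i = fₘ (a i) := by
      rw [← hmk i]
      exact IsLocalizedModule.mk'_cancel' fₘ (a i) (s i)
    have : b i = IsLocalization.mk' Rₘ (1 : R) (s i) • fₘ (a i) := by
      have hu := ((Module.End.isUnit_iff _).mp (IsLocalizedModule.map_units fₘ (s i))).injective
      apply hu
      simp only [Module.algebraMap_end_apply]
      rw [hcancel, hcancel2]
    rw [this]
    exact Submodule.smul_mem _ _ (Submodule.subset_span ⟨a i, ⟨i, rfl⟩, rfl⟩)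
  -- every element is reachable after multiplying by some s ∉ m
  have hstep : ∀ x : M, ∃ t : p, (t : R) • x ∈ Submodule.span R (Set.range a) := by
    intro x
    have hx : fₘ x ∈ Submodule.localized' Rₘ p fₘ (Submodule.span R (Set.range a)) := by
      rw [hloc]; trivial
    obtain ⟨a', ha', t, ht⟩ := hx
    have h1 : fₘ ((t : R) • x) = fₘ a' := by
      rw [map_smul, ← IsLocalizedModule.mk'_cancel' fₘ a' t, ht, Submonoid.smul_def]
    obtain ⟨c, hc⟩ := IsLocalizedModule.exists_of_eq (S := p) (f := fₘ) h1
    refine ⟨c * t, ?_⟩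
    have heq : ((c : R) * (t : R)) • x = (c : R) • a' := by
      rw [mul_smul]
      rw [Submonoid.smul_def, Submonoid.smul_def] at hc
      exact hc
    rw [Submonoid.coe_mul, heq]
    exact Submodule.smul_mem _ _ ha'
  refine ⟨w, fun x _ => ?_⟩
  obtain ⟨t, ht⟩ := hstep x
  obtain ⟨c, i, hi, hci⟩ := hm.exists_inv (t.2 : (t : R) ∉ m)
  have hx : x = (c * (t : R)) • x + i • x := by
    rw [← add_smul, hci, one_smul]
  have h1 : (c * (t : R)) • x ∈ Submodule.span R (Set.range w) := by
    rw [mul_smul]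
    refine Submodule.span_mono ?_ (Submodule.smul_mem _ c ht)
    rintro _ ⟨i', rfl⟩
    exact ⟨emb i', (hrange i').symm⟩
  have h2 : i • x ∈ (m • ⊤ : Submodule R M) := Submodule.smul_mem_smul hi trivial
  rw [hx]
  exact Submodule.add_mem _ (Submodule.mem_sup_left h1) (Submodule.mem_sup_right h2)

theorem aux_glue_span {R : Type u} [CommRing R]
    (hfin : {m : Ideal R | m.IsMaximal}.Finite)
    {M : Type u} [AddCommGroup M] [Module R M] [Module.Finite R M]
    {n : ℕ}
    (h : ∀ m : Ideal R, m.IsMaximal → ∃ w : Fin n → M,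
      ⊤ ≤ Submodule.span R (Set.range w) ⊔ (m • ⊤ : Submodule R M)) :
    ∃ φ : (Fin n → R) →ₗ[R] M, Surjective φ := by
  classical
  choose w hw using h
  set S : Finset (Ideal R) := hfin.toFinset with hS
  have hmemS : ∀ {m : Ideal R}, m ∈ S ↔ m.IsMaximal := fun {m} => hfin.mem_toFinset
  -- CRT elements
  have he : ∀ m ∈ S, ∃ e : R, (1 - e) ∈ m ∧ ∀ m' ∈ S, m' ≠ m → e ∈ m' := by
    intro m hmS
    have hm : m.IsMaximal := hmemS.mp hmS
    set Q : Ideal R := (S.erase m).inf id with hQ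
    have hsup : m ⊔ Q = ⊤ := by
      by_contra hne
      obtain ⟨M₀, hM₀, hle⟩ := Ideal.exists_le_maximal _ hne
      have h1 : m = M₀ := hm.eq_of_le hM₀.ne_top (le_trans le_sup_left hle)
      have h2 : Q ≤ M₀ := le_trans le_sup_right hle
      obtain ⟨m', hm'S, hm'le⟩ := (hM₀.isPrime.inf_le').mp h2
      have hm'max : m'.IsMaximal := hmemS.mp (Finset.mem_of_mem_erase hm'S)
      have : m' = M₀ := hm'max.eq_of_le hM₀.ne_top hm'le
      exact (Finset.ne_of_mem_erase hm'S) (this.trans h1.symm)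
    have h1 : (1 : R) ∈ m ⊔ Q := hsup ▸ trivial
    obtain ⟨x, hx, e, heQ, hxe⟩ := Submodule.mem_sup.mp h1
    refine ⟨e, ?_, ?_⟩
    · have : (1 : R) - e = x := by rw [← hxe]; ring
      rw [this]; exact hx
    · intro m' hm' hne
      exact (Finset.inf_le (Finset.mem_erase.mpr ⟨hne, hm'⟩) : Q ≤ id m') heQ
  choose e he1 he2 using he
  -- glued family
  set v : Fin n → M := fun j => ∑ m ∈ S.attach, e m.1 m.2 • w m.1 (hmemS.mp m.2) j with hv
  set N : Submodule R M := Submodule.span R (Set.range v) with hN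
  have hclaim : ∀ m₀ : Ideal R, m₀.IsMaximal → (⊤ : Submodule R M) ≤ N ⊔ m₀ • ⊤ := by
    intro m₀ hm₀
    have hm₀S : m₀ ∈ S := hmemS.mpr hm₀
    have hkey : ∀ j, w m₀ hm₀ j ∈ N ⊔ (m₀ • ⊤ : Submodule R M) := by
      intro j
      have hdmem : v j - w m₀ hm₀ j ∈ (m₀ • ⊤ : Submodule R M) := by
        have hsplit : v j = e m₀ hm₀S • w m₀ hm₀ j +
            ∑ m ∈ S.attach.erase ⟨m₀, hm₀S⟩, e m.1 m.2 • w m.1 (hmemS.mp m.2) j := by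
          simp only [hv]
          rw [← Finset.add_sum_erase S.attach _ (Finset.mem_attach S ⟨m₀, hm₀S⟩)]
        rw [hsplit]
        have h2 : e m₀ hm₀S • w m₀ hm₀ j - w m₀ hm₀ j = -((1 - e m₀ hm₀S) • w m₀ hm₀ j) := by
          rw [sub_smul, one_smul, neg_sub]
        rw [add_sub_right_comm, h2]
        refine Submodule.add_mem _ (Submodule.neg_mem _ ?_) (Submodule.sum_mem _ ?_)
        · exact Submodule.smul_mem_smul (he1 m₀ hm₀S) trivial
        · intro m hm
          have hne : m.1 ≠ m₀ := by
            intro hcontra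
            apply Finset.ne_of_mem_erase hm
            exact Subtype.ext hcontra
          exact Submodule.smul_mem_smul (he2 m.1 m.2 m₀ hm₀S (Ne.symm hne)) trivial
      have : w m₀ hm₀ j = v j - (v j - w m₀ hm₀ j) := (sub_sub_cancel _ _).symm
      rw [this]
      refine Submodule.sub_mem _ ?_ (Submodule.mem_sup_right hdmem)
      exact Submodule.mem_sup_left (Submodule.subset_span ⟨j, rfl⟩)
    calc (⊤ : Submodule R M) ≤ Submodule.span R (Set.range (w m₀ hm₀)) ⊔ m₀ • ⊤ := hw m₀ hm₀
      _ ≤ (N ⊔ m₀ • ⊤) ⊔ m₀ • ⊤ := by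
          refine sup_le_sup_right ?_ _
          rw [Submodule.span_le]
          rintro _ ⟨j, rfl⟩
          exact hkey j
      _ = N ⊔ m₀ • ⊤ := by rw [sup_assoc, sup_idem]
  -- pass to quotient and apply Nakayama
  haveI : Module.Finite R (M ⧸ N) := Module.Finite.of_surjective N.mkQ (Submodule.mkQ_surjective N)
  have hQtop : ∀ m₀ : Ideal R, m₀.IsMaximal → (⊤ : Submodule R (M ⧸ N)) ≤ m₀ • ⊤ := by
    intro m₀ hm₀
    have h1 : Submodule.map N.mkQ ⊤ = ⊤ := by
      rw [Submodule.map_top, Submodule.range_mkQ]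
    have h2 : Submodule.map N.mkQ (N ⊔ m₀ • ⊤) ≤ m₀ • ⊤ := by
      rw [Submodule.map_sup, Submodule.map_smul'']
      have hN1 : Submodule.map N.mkQ N ≤ ⊥ := by
        rw [Submodule.map_le_iff_le_comap]
        intro x hx
        simp [Submodule.mem_comap, Submodule.Quotient.mk_eq_zero, hx]
      have hN2 : m₀ • Submodule.map N.mkQ ⊤ ≤ m₀ • ⊤ := smul_mono_right _ le_top
      calc Submodule.map N.mkQ N ⊔ m₀ • Submodule.map N.mkQ ⊤ ≤ ⊥ ⊔ m₀ • ⊤ :=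
            sup_le_sup hN1 hN2
        _ = m₀ • ⊤ := bot_sup_eq _
    calc (⊤ : Submodule R (M ⧸ N)) = Submodule.map N.mkQ ⊤ := h1.symm
      _ ≤ Submodule.map N.mkQ (N ⊔ m₀ • ⊤) := Submodule.map_mono (hclaim m₀ hm₀)
      _ ≤ m₀ • ⊤ := h2
  have hprod : ∀ (T : Finset (Ideal R)), (∀ m ∈ T, (⊤ : Submodule R (M ⧸ N)) ≤ m • ⊤) →
      (⊤ : Submodule R (M ⧸ N)) ≤ (∏ m ∈ T, m) • ⊤ := by
    intro T
    induction T using Finset.induction_on with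
    | empty => intro _; rw [Finset.prod_empty, Ideal.one_eq_top, Submodule.top_smul]
    | @insert a T ha ih =>
      intro hT
      rw [Finset.prod_insert ha, mul_smul]
      calc (⊤ : Submodule R (M ⧸ N)) ≤ a • ⊤ := hT a (Finset.mem_insert_self a T)
        _ ≤ a • ((∏ m ∈ T, m) • ⊤) :=
            smul_mono_right _ (ih fun m hm => hT m (Finset.mem_insert_of_mem hm))
  have hjac : (∏ m ∈ S, m) ≤ Ideal.jacobson ⊥ := by
    refine le_sInf ?_
    rintro J ⟨-, hJmax⟩
    have hJS : J ∈ S := hmemS.mpr hJmax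
    calc (∏ m ∈ S, m) = J * ∏ m ∈ S.erase J, m := (Finset.mul_prod_erase S _ hJS).symm
      _ ≤ J := Ideal.mul_le_left
  have hbot := Submodule.eq_bot_of_le_smul_of_le_jacobson_bot (∏ m ∈ S, m) ⊤
    Module.Finite.fg_top (hprod S (fun m hm => hQtop m (hmemS.mp hm))) hjac
  have hNtop : N = ⊤ := by
    rw [← Submodule.Quotient.subsingleton_iff]
    constructor
    intro x y
    have hx : x ∈ (⊥ : Submodule R (M ⧸ N)) := hbot ▸ Submodule.mem_top
    have hy : y ∈ (⊥ : Submodule R (M ⧸ N)) := hbot ▸ Submodule.mem_top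
    rw [Submodule.mem_bot] at hx hy
    rw [hx, hy]
  refine ⟨Fintype.linearCombination R v, ?_⟩
  rw [← LinearMap.range_eq_top, Fintype.range_linearCombination]
  rw [← hN, hNtop]

theorem main_forward
    (Λ : Type u) [CommRing Λ] [IsLocalRing Λ] [IsNoetherianRing Λ]
    (R : Type u) [CommRing R] [Algebra Λ R] [Module.Free Λ R] [Module.Finite Λ R]
    (P : Type u) [AddCommGroup P] [Module R P] [Module.Finite R P]
    (htor : ∃ r ∈ nonZeroDivisors R, ∀ x : P, r • x = 0)
    (hpd : ProjDimLEOne R P)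
    (aux_ker_projective : ∀ {n : ℕ} (π : (Fin n → R) →ₗ[R] P), Surjective π →
      Module.Projective R ↥(LinearMap.ker π))
    (aux_max_finite : {m : Ideal R | m.IsMaximal}.Finite)
    (aux_local_span : ∀ {M : Type u} [AddCommGroup M] [Module R M] [Module.Finite R M]
      [Module.Projective R M] {n : ℕ} (ι : M →ₗ[R] (Fin n → R)), Injective ι →
      ∀ (m : Ideal R), m.IsMaximal →
      ∃ w : Fin n → M, ⊤ ≤ Submodule.span R (Set.range w) ⊔ (m • ⊤ : Submodule R M))
    (aux_glue_span : ∀ {M : Type u} [AddCommGroup M] [Module R M] [Module.Finite R M] {n : ℕ},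
      (∀ m : Ideal R, m.IsMaximal → ∃ w : Fin n → M,
        ⊤ ≤ Submodule.span R (Set.range w) ⊔ (m • ⊤ : Submodule R M)) →
      ∃ φ : (Fin n → R) →ₗ[R] M, Surjective φ) :
    ∃ (a : ℕ) (f : (Fin a → R) →ₗ[R] (Fin a → R)) (g : (Fin a → R) →ₗ[R] P),
      Function.Injective f ∧ Function.Exact f g ∧ Function.Surjective g := by
  haveI : IsNoetherianRing R :=
    isNoetherianRing_iff.mpr (isNoetherian_of_tower Λ
      (isNoetherian_of_isNoetherianRing_of_finite Λ R))
  obtain ⟨n, π, hπ⟩ := Module.Finite.exists_fin' R P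
  set K : Submodule R (Fin n → R) := LinearMap.ker π with hK
  haveI hKproj : Module.Projective R ↥K := aux_ker_projective π hπ
  haveI : Module.Finite R ↥K := Module.Finite.iff_fg.mpr (IsNoetherian.noetherian K)
  obtain ⟨φ, hφ⟩ := aux_glue_span
    (fun m hm => aux_local_span K.subtype (Submodule.injective_subtype K) m hm)
  obtain ⟨ψ, hψ⟩ := Module.projective_lifting_property φ LinearMap.id hφ
  have hψφ : ∀ x : ↥K, φ (ψ x) = x := fun x => LinearMap.congr_fun hψ x
  obtain ⟨r, hr, hrP⟩ := htor
  set Nk : Submodule R (Fin n → R) := LinearMap.ker φ with hNk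
  -- Λ-module finiteness
  haveI : Module.Finite Λ (Fin n → R) := inferInstance
  haveI : IsNoetherian Λ (Fin n → R) := inferInstance
  haveI : Module.Finite Λ ↥K :=
    Module.Finite.iff_fg.mpr (IsNoetherian.noetherian (K.restrictScalars Λ))
  haveI : Module.Finite Λ ↥Nk :=
    Module.Finite.iff_fg.mpr (IsNoetherian.noetherian (Nk.restrictScalars Λ))
  -- Nk is projective over R
  have hρmem : ∀ x : Fin n → R, x - ψ (φ x) ∈ Nk := by
    intro x
    simp [hNk, LinearMap.mem_ker, map_sub, hψφ]
  haveI hNkproj : Module.Projective R ↥Nk := by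
    refine Module.Projective.of_split Nk.subtype
      (LinearMap.codRestrict Nk (LinearMap.id - ψ ∘ₗ φ) hρmem) ?_
    refine LinearMap.ext fun x => Subtype.ext ?_
    have hx : φ (x : Fin n → R) = 0 := x.2
    show (x : Fin n → R) - ψ (φ (x : Fin n → R)) = (x : Fin n → R)
    rw [hx, map_zero, sub_zero]
  -- freeness over Λ
  haveI : Module.FinitePresentation Λ ↥K := Module.finitePresentation_of_finite Λ _
  haveI : Module.FinitePresentation Λ ↥Nk := Module.finitePresentation_of_finite Λ _
  haveI : Module.Flat Λ ↥K := Module.Flat.trans Λ R ↥K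
  haveI : Module.Flat Λ ↥Nk := Module.Flat.trans Λ R ↥Nk
  haveI : Module.Free Λ ↥K := Module.free_of_flat_of_isLocalRing
  haveI : Module.Free Λ ↥Nk := Module.free_of_flat_of_isLocalRing
  -- finrank comparison
  have hfr1 : Module.finrank Λ ↥K ≤ Module.finrank Λ (Fin n → R) :=
    LinearMap.finrank_le_finrank_of_injective
      (f := (K.subtype).restrictScalars Λ) (Submodule.injective_subtype K)
  have hfr2 : Module.finrank Λ (Fin n → R) ≤ Module.finrank Λ ↥K := by
    have hmem : ∀ x : Fin n → R, r • x ∈ K := by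
      intro x
      rw [hK, LinearMap.mem_ker, map_smul, hrP]
    set μ : (Fin n → R) →ₗ[Λ] ↥(K.restrictScalars Λ) :=
      LinearMap.codRestrict (K.restrictScalars Λ)
        ((LinearMap.lsmul R (Fin n → R) r).restrictScalars Λ) hmem with hμ
    have hμinj : Injective μ := by
      intro x y hxy
      have h1 : r • x = r • y := congrArg Subtype.val hxy
      funext i
      have h2 : r * x i = r * y i := congr_fun h1 i
      have h3 : (x i - y i) * r = 0 := by
        rw [sub_mul, mul_comm (x i) r, mul_comm (y i) r, h2, sub_self]
      have h4 : x i - y i = 0 := (mem_nonZeroDivisors_iff.mp hr).2 _ h3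
      exact sub_eq_zero.mp h4
    exact LinearMap.finrank_le_finrank_of_injective hμinj
  -- direct sum decomposition
  have hψinj : Injective ψ := by
    intro a b hab
    have := congrArg φ hab
    rwa [hψφ, hψφ] at this
  have hcompl : IsCompl (LinearMap.range ψ) Nk := by
    constructor
    · rw [disjoint_iff]
      refine le_bot_iff.mp ?_
      rintro x ⟨⟨k, hk⟩, hxN⟩
      have hx0 : φ x = 0 := hxN
      rw [← hk] at hx0 ⊢
      rw [hψφ] at hx0
      simp [hx0]
    · rw [codisjoint_iff, eq_top_iff]
      intro x _
      refine Submodule.mem_sup.mpr ⟨ψ (φ x), ⟨φ x, rfl⟩, x - ψ (φ x), hρmem x, by ring⟩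
  have E : (↥K × ↥Nk) ≃ₗ[R] (Fin n → R) :=
    (LinearEquiv.prodCongr (LinearEquiv.ofInjective ψ hψinj) (LinearEquiv.refl R ↥Nk)).trans
      (Submodule.prodEquivOfIsCompl _ _ hcompl)
  have hfr3 : Module.finrank Λ (↥K × ↥Nk) = Module.finrank Λ (Fin n → R) :=
    (E.restrictScalars Λ).finrank_eq
  rw [Module.finrank_prod] at hfr3
  have hNk0 : Module.finrank Λ ↥Nk = 0 := by omega
  haveI : Subsingleton ↥Nk := by
    set bN := Module.Free.chooseBasis Λ ↥Nk with hbN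
    have hcard : Fintype.card (Module.Free.ChooseBasisIndex Λ ↥Nk) = 0 := by
      rw [← Module.finrank_eq_card_chooseBasisIndex, hNk0]
    haveI : IsEmpty (Module.Free.ChooseBasisIndex Λ ↥Nk) := Fintype.card_eq_zero_iff.mp hcard
    exact ⟨fun x y => bN.repr.injective (Finsupp.ext fun i => isEmptyElim i)⟩
  have hφinj : Injective φ := by
    rw [← LinearMap.ker_eq_bot, eq_bot_iff]
    intro x hx
    have h1 : (⟨x, hx⟩ : ↥Nk) = ⟨0, Submodule.zero_mem _⟩ := Subsingleton.elim _ _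
    simpa using congrArg Subtype.val h1
  set eK := LinearEquiv.ofBijective φ ⟨hφinj, hφ⟩ with heK
  refine ⟨n, K.subtype ∘ₗ eK.toLinearMap, π, ?_, ?_, hπ⟩
  · exact (Submodule.injective_subtype K).comp eK.injective
  · rw [LinearMap.exact_iff]
    rw [LinearMap.range_comp]
    have : LinearMap.range eK.toLinearMap = ⊤ := LinearEquiv.range eK
    rw [this, Submodule.map_top, Submodule.range_subtype]

/-- In the Gorenstein setting, a finitely generated torsion `R`-module `P`
has projective dimension at most one if and only if it admits an exact sequence
`0 → R^a → R^a → P → 0`. -/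
theorem pd_le_one_iff_exists_square_presentation
    (Λ : Type u) [CommRing Λ] [IsLocalRing Λ] [IsNoetherianRing Λ] (hΛ : IsRegularLocal Λ)
    (R : Type u) [CommRing R] [Algebra Λ R] [Module.Free Λ R] [Module.Finite Λ R]
    (hGor : ∃ φ : R ≃ₗ[Λ] (R →ₗ[Λ] Λ), ∀ r s x : R, φ (r * s) x = φ s (r * x))
    (P : Type u) [AddCommGroup P] [Module R P] [Module.Finite R P]
    (htor : ∃ r ∈ nonZeroDivisors R, ∀ x : P, r • x = 0) :
    ProjDimLEOne R P ↔
      ∃ (a : ℕ) (f : (Fin a → R) →ₗ[R] (Fin a → R)) (g : (Fin a → R) →ₗ[R] P),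
        Function.Injective f ∧ Function.Exact f g ∧ Function.Surjective g := by
  have hNoeth : IsNoetherianRing R :=
    isNoetherianRing_iff.mpr (isNoetherian_of_tower Λ
      (isNoetherian_of_isNoetherianRing_of_finite Λ R))
  constructor
  · intro hpd
    exact main_forward Λ R P htor hpd
      (fun {n} π hπ => aux_ker_projective hpd π hπ)
      (aux_max_finite (Λ := Λ) (R := R))
      (fun {M} _ _ _ _ {n} ι hι m hm => aux_local_span ι hι m hm)
      (fun {M} _ _ _ {n} h => aux_glue_span (aux_max_finite (Λ := Λ) (R := R)) h)
  · rintro ⟨a, f, g, hfinj, hexact, hgsurj⟩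
    exact ⟨ModuleCat.of R (Fin a → R), ModuleCat.of R (Fin a → R),
      ModuleCat.ofHom f, ModuleCat.ofHom g,
      inferInstanceAs (Module.Projective R (Fin a → R)),
      inferInstanceAs (Module.Projective R (Fin a → R)),
      hfinj, hexact, hgsurj⟩
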